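/- Jacobi's triple product identity: for every complex number q with 0 < |q| < 1 and every nonzero complex number z, the bilateral series ∑_{k=-∞}^{∞} (-1)^k q^{k(k-1)/2} z^k converges absolutely and equals (q;q)_∞ · (z;q)_∞ · (q/z;q)_∞. -/

import Mathlib

/-- The infinite q-shifted factorial `(a;q)_∞ = ∏_{j ≥ 0} (1 - a q^j)`. -/
noncomputable def qPochInf (a q : ℂ) : ℂ := ∏' j : ℕ, (1 - a * q ^ j)

open Filter Finset Topology

-- Convergence of ∏ (1 + f n) for summable f, allowing zero factors.
lemma jtp_multipliable_one_add {f : ℕ → ℂ} (hf : Summable f) :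
    Multipliable (fun n => 1 + f n) := by
  by_cases h : ∀ n, 1 + f n ≠ 0
  · have h0 : Tendsto (fun n => ‖f n‖) atTop (𝓝 0) := by
      simpa using hf.tendsto_atTop_zero.norm
    have h2 : ∀ᶠ n in atTop, ‖f n‖ ≤ 1/2 := h0.eventually_le_const (by norm_num)
    have hlog : Summable (fun n => Complex.log (1 + f n)) := by
      apply Summable.of_norm_bounded_eventually (g := fun n => 3/2 * ‖f n‖) (hf.norm.mul_left _)
      rw [Nat.cofinite_eq_atTop]
      filter_upwards [h2] with n hn
      exact Complex.norm_log_one_add_half_le_self hn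
    have hp := hlog.hasSum.cexp
    have heq : (Complex.exp ∘ fun n => Complex.log (1 + f n)) = fun n => 1 + f n :=
      funext fun n => Complex.exp_log (h n)
    exact ⟨_, heq ▸ hp⟩
  · push_neg at h
    obtain ⟨n0, hn0⟩ := h
    refine ⟨0, ?_⟩
    rw [HasProd]
    apply Tendsto.congr' _ tendsto_const_nhds
    filter_upwards [eventually_ge_atTop ({n0} : Finset ℕ)] with s hs
    exact (Finset.prod_eq_zero (hs (Finset.mem_singleton_self n0)) hn0).symm


noncomputable def jtpP (q : ℂ) (n : ℕ) : ℂ := ∏ j ∈ Finset.range n, (1 - q * q ^ j)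

lemma jtp_tendsto_poch (q a : ℂ) (hq1 : ‖q‖ < 1) :
    Tendsto (fun N => ∏ j ∈ Finset.range N, (1 - a * q ^ j)) atTop (𝓝 (qPochInf a q)) := by
  have hs : Summable (fun j => -(a * q ^ j)) := by
    refine Summable.neg ?_
    refine Summable.mul_left a ?_
    exact summable_geometric_of_norm_lt_one (by simpa using hq1)
  have hm := jtp_multipliable_one_add hs
  have hm' : Multipliable (fun j => 1 - a * q ^ j) := by
    simpa [sub_eq_add_neg] using hm
  simpa [qPochInf] using hm'.hasProd.tendsto_prod_nat

-- real exp bound : exp(-(y/(1-r))) ≤ 1 - y for 0 ≤ y ≤ r < 1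
lemma jtp_exp_le {r y : ℝ} (hy0 : 0 ≤ y) (hyr : y ≤ r) (hr : r < 1) :
    Real.exp (-(y / (1 - r))) ≤ 1 - y := by
  have h1y : 0 < 1 - y := by linarith
  have h1r : 0 < 1 - r := by linarith
  have step1 : Real.exp (-(y / (1 - r))) ≤ Real.exp (-(y / (1 - y))) := by
    apply Real.exp_le_exp.mpr
    have : y / (1 - y) ≤ y / (1 - r) := by
      apply div_le_div_of_nonneg_left hy0 h1r ?_ |>.trans_eq rfl
      linarith
    linarith
  refine step1.trans ?_
  have hexp := Real.add_one_le_exp (y / (1 - y))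
  have hval : y / (1 - y) + 1 = 1 / (1 - y) := by field_simp; ring
  rw [Real.exp_neg]
  rw [inv_le_comm₀ (Real.exp_pos _) h1y, show (1-y)⁻¹ = 1/(1-y) by rw [one_div], ← hval]
  linarith

lemma jtp_geom_sum_le {r : ℝ} (hr0 : 0 ≤ r) (hr : r < 1) (n : ℕ) :
    ∑ j ∈ Finset.range n, r ^ (j+1) ≤ r / (1 - r) := by
  have hsum : ∑ j ∈ Finset.range n, r ^ (j+1) = r * ∑ j ∈ Finset.range n, r ^ j := by
    rw [Finset.mul_sum]; exact Finset.sum_congr rfl fun j _ => by ring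
  rw [hsum, div_eq_mul_inv]
  apply mul_le_mul_of_nonneg_left _ hr0
  have := Summable.sum_le_tsum (Finset.range n) (fun i _ => pow_nonneg hr0 i)
    (summable_geometric_of_lt_one hr0 hr)
  simpa [tsum_geometric_of_lt_one hr0 hr] using this

lemma jtp_abs_P_le (q : ℂ) (hq1 : ‖q‖ < 1) (n : ℕ) :
    ‖jtpP q n‖ ≤ Real.exp (‖q‖ / (1 - ‖q‖)) := by
  set r := ‖q‖ with hr
  have hr0 : 0 ≤ r := norm_nonneg q
  calc ‖jtpP q n‖ = ∏ j ∈ Finset.range n, ‖1 - q * q ^ j‖ := by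
        rw [jtpP, norm_prod]
    _ ≤ ∏ j ∈ Finset.range n, Real.exp (r ^ (j+1)) := by
        apply Finset.prod_le_prod (fun j _ => norm_nonneg _)
        intro j _
        have h1 : ‖1 - q * q ^ j‖ ≤ 1 + r ^ (j+1) := by
          calc ‖1 - q * q ^ j‖ ≤ ‖(1:ℂ)‖ + ‖q * q ^ j‖ := by
                simpa [sub_eq_add_neg] using norm_add_le (1:ℂ) (-(q * q ^ j))
            _ = 1 + r ^ (j+1) := by simp [norm_mul, norm_pow, pow_succ, hr]; ring
        refine h1.trans ?_
        have := Real.add_one_le_exp (r ^ (j+1))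
        linarith
    _ = Real.exp (∑ j ∈ Finset.range n, r ^ (j+1)) := by rw [Real.exp_sum]
    _ ≤ Real.exp (r / (1 - r)) := Real.exp_le_exp.mpr (jtp_geom_sum_le hr0 hq1 n)

lemma jtp_abs_P_ge (q : ℂ) (hq1 : ‖q‖ < 1) (n : ℕ) :
    Real.exp (-(‖q‖ / (1 - ‖q‖) ^ 2)) ≤ ‖jtpP q n‖ := by
  set r := ‖q‖ with hr
  have hr0 : 0 ≤ r := norm_nonneg q
  have h1r : 0 < 1 - r := by linarith
  calc Real.exp (-(r / (1 - r) ^ 2))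
      ≤ Real.exp (-((∑ j ∈ Finset.range n, r ^ (j+1)) / (1 - r))) := by
        apply Real.exp_le_exp.mpr
        have := jtp_geom_sum_le hr0 hq1 n
        have h2 : (∑ j ∈ Finset.range n, r ^ (j+1)) / (1 - r) ≤ (r / (1-r)) / (1 - r) :=
          (div_le_div_iff_of_pos_right h1r).mpr this
        have h3 : (r / (1-r)) / (1 - r) = r / (1 - r)^2 := by rw [div_div, ← sq]
        linarith [h2.trans_eq h3]
    _ = ∏ j ∈ Finset.range n, Real.exp (-(r ^ (j+1) / (1 - r))) := by
        rw [← Real.exp_sum]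
        congr 1
        rw [Finset.sum_neg_distrib, Finset.sum_div]
    _ ≤ ∏ j ∈ Finset.range n, ‖1 - q * q ^ j‖ := by
        apply Finset.prod_le_prod (fun j _ => (Real.exp_pos _).le)
        intro j _
        have hy : r ^ (j+1) ≤ r := by
          calc r ^ (j+1) ≤ r ^ 1 := pow_le_pow_of_le_one hr0 hq1.le (by omega)
            _ = r := pow_one r
        refine (jtp_exp_le (pow_nonneg hr0 _) hy hq1).trans ?_
        calc 1 - r ^ (j+1) = ‖(1:ℂ)‖ - ‖q * q ^ j‖ := by
              simp [norm_mul, norm_pow, pow_succ, hr]; ring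
          _ ≤ ‖1 - q * q ^ j‖ := by
              simpa using norm_sub_norm_le (1:ℂ) (q * q ^ j)
    _ = ‖jtpP q n‖ := by rw [jtpP, norm_prod]


noncomputable def jtpB (q : ℂ) (n k : ℕ) : ℂ :=
  if k ≤ n then jtpP q n / (jtpP q k * jtpP q (n - k)) else 0

lemma jtpP_ne_zero {q : ℂ} (hq1 : ‖q‖ < 1) (n : ℕ) : jtpP q n ≠ 0 := by
  rw [jtpP]
  apply Finset.prod_ne_zero_iff.mpr
  intro j _
  intro h
  have h1 : (1:ℂ) = q * q ^ j := sub_eq_zero.mp h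
  have : ‖q * q ^ j‖ < 1 := by
    rw [norm_mul, norm_pow]
    calc ‖q‖ * ‖q‖ ^ j ≤ ‖q‖ * 1 := by
          apply mul_le_mul_of_nonneg_left _ (norm_nonneg q)
          exact pow_le_one₀ (norm_nonneg q) hq1.le
      _ < 1 := by simpa using hq1
  rw [← h1] at this
  simp at this

lemma jtpP_succ (q : ℂ) (n : ℕ) : jtpP q (n + 1) = jtpP q n * (1 - q * q ^ n) :=
  Finset.prod_range_succ _ n

lemma jtpB_zero (q : ℂ) (hq1 : ‖q‖ < 1) (n : ℕ) : jtpB q n 0 = 1 := by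
  rw [jtpB, if_pos (Nat.zero_le n)]
  simp [jtpP]
  exact jtpP_ne_zero hq1 n

lemma jtpB_self (q : ℂ) (hq1 : ‖q‖ < 1) (n : ℕ) : jtpB q n n = 1 := by
  rw [jtpB, if_pos le_rfl, Nat.sub_self]
  have h0 : jtpP q 0 = 1 := by simp [jtpP]
  rw [h0, mul_one]
  exact div_self (jtpP_ne_zero hq1 n)

lemma jtpB_pascal {q : ℂ} (hq1 : ‖q‖ < 1) (n k : ℕ) (hk : k ≤ n) :
    jtpB q (n+1) (k+1) = jtpB q n (k+1) + q ^ (n - k) * jtpB q n k := by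
  rcases eq_or_lt_of_le hk with rfl | hlt
  · rw [jtpB_self q hq1, jtpB_self q hq1, jtpB, if_neg (by omega), Nat.sub_self]
    simp
  · obtain ⟨d, rfl⟩ : ∃ d, n = k + (d + 1) := ⟨n - k - 1, by omega⟩
    rw [jtpB, if_pos (by omega), jtpB, if_pos (by omega), jtpB, if_pos (by omega)]
    have e1 : k + (d + 1) + 1 - (k + 1) = d + 1 := by omega
    have e2 : k + (d + 1) - (k + 1) = d := by omega
    have e3 : k + (d + 1) - k = d + 1 := by omega
    rw [e1, e2, e3]
    have hPk := jtpP_ne_zero hq1 k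
    have hPk1 := jtpP_ne_zero hq1 (k+1)
    have hPd := jtpP_ne_zero hq1 d
    have hPd1 := jtpP_ne_zero hq1 (d+1)
    have hsk : jtpP q (k+1) = jtpP q k * (1 - q * q ^ k) := jtpP_succ q k
    have hsd : jtpP q (d+1) = jtpP q d * (1 - q * q ^ d) := jtpP_succ q d
    have hsn : jtpP q (k + (d+1) + 1) = jtpP q (k + (d+1)) * (1 - q * q ^ (k + (d+1))) := by
      rw [← jtpP_succ]
    rw [hsn, hsk, hsd]
    have h1k : (1 : ℂ) - q * q ^ k ≠ 0 := by
      have := jtpP_ne_zero hq1 (k+1); rw [hsk] at this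
      exact fun h => this (by rw [h, mul_zero])
    have h1d : (1 : ℂ) - q * q ^ d ≠ 0 := by
      have := jtpP_ne_zero hq1 (d+1); rw [hsd] at this
      exact fun h => this (by rw [h, mul_zero])
    field_simp
    ring

lemma jtp_tri_succ (k : ℕ) : (k+1) * ((k+1) - 1) / 2 = k * (k - 1) / 2 + k := by
  rcases k with _ | m
  · simp
  · have h1 : (m + 1 + 1) * (m + 1 + 1 - 1) = (m + 1) * (m + 1 - 1) + 2 * (m + 1) := by
      simp only [Nat.add_sub_cancel]; ring
    rw [h1, Nat.add_mul_div_left _ _ (by norm_num : 0 < 2)]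

lemma jtpB_top (q : ℂ) (n : ℕ) : jtpB q n (n + 1) = 0 := by
  rw [jtpB, if_neg (by omega)]

theorem jtp_qbinom {q : ℂ} (hq1 : ‖q‖ < 1) (n : ℕ) (w : ℂ) :
    ∏ j ∈ Finset.range n, (1 + w * q ^ j)
      = ∑ k ∈ Finset.range (n+1), q ^ (k * (k - 1) / 2) * jtpB q n k * w ^ k := by
  induction n with
  | zero => simp [jtpB_zero q hq1 0]
  | succ n ih =>
    rw [Finset.prod_range_succ, ih]
    -- expand the RHS sum over range (n+2)
    rw [Finset.sum_range_succ' (fun k => q ^ (k * (k - 1) / 2) * jtpB q (n+1) k * w ^ k) (n+1)]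
    simp only [Nat.zero_mul, Nat.zero_div, pow_zero, jtpB_zero q hq1, one_mul, mul_one]
    have hsplit : ∀ k ∈ Finset.range (n+1),
        q ^ ((k+1) * ((k+1) - 1) / 2) * jtpB q (n+1) (k+1) * w ^ (k+1)
          = q ^ ((k+1) * ((k+1) - 1) / 2) * jtpB q n (k+1) * w ^ (k+1)
            + (q ^ (k * (k - 1) / 2) * jtpB q n k * w ^ k) * (w * q ^ n) := by
      intro k hk
      rw [Finset.mem_range] at hk
      have hkn : k ≤ n := by omega
      rw [jtpB_pascal hq1 n k hkn]
      rw [jtp_tri_succ k, pow_add]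
      have hqn : q ^ (k * (k-1) / 2) * q ^ k * (q ^ (n - k) * jtpB q n k) * w ^ (k+1)
          = (q ^ (k * (k - 1) / 2) * jtpB q n k * w ^ k) * (w * q ^ n) := by
        have : q ^ k * q ^ (n - k) = q ^ n := by
          rw [← pow_add]; congr 1; omega
        calc q ^ (k * (k-1) / 2) * q ^ k * (q ^ (n - k) * jtpB q n k) * w ^ (k+1)
            = q ^ (k * (k-1) / 2) * (q ^ k * q ^ (n - k)) * jtpB q n k * w ^ (k+1) := by ring
          _ = q ^ (k * (k-1) / 2) * q ^ n * jtpB q n k * w ^ (k+1) := by rw [this]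
          _ = (q ^ (k * (k - 1) / 2) * jtpB q n k * w ^ k) * (w * q ^ n) := by
              rw [pow_succ]; ring
      linear_combination hqn
    rw [Finset.sum_congr rfl hsplit, Finset.sum_add_distrib]
    -- first part: ∑_{k<n+1} g (k+1) where g k = q^(k(k-1)/2) jtpB n k w^k
    have hfirst : (∑ k ∈ Finset.range (n+1),
        q ^ ((k+1) * ((k+1) - 1) / 2) * jtpB q n (k+1) * w ^ (k+1)) + 1
          = ∑ k ∈ Finset.range (n+1), q ^ (k * (k - 1) / 2) * jtpB q n k * w ^ k := by
      have := Finset.sum_range_succ' (fun k => q ^ (k * (k - 1) / 2) * jtpB q n k * w ^ k) (n+1)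
      rw [Finset.sum_range_succ (fun k => q ^ (k * (k - 1) / 2) * jtpB q n k * w ^ k) (n+1)] at this
      rw [jtpB_top q n] at this
      simp only [mul_zero, zero_mul, add_zero, Nat.zero_mul, Nat.zero_div, pow_zero,
        jtpB_zero q hq1, one_mul, mul_one] at this
      linear_combination -this
    have hsecond : (∑ k ∈ Finset.range (n+1),
        (q ^ (k * (k - 1) / 2) * jtpB q n k * w ^ k) * (w * q ^ n))
          = (∑ k ∈ Finset.range (n+1), q ^ (k * (k - 1) / 2) * jtpB q n k * w ^ k) * (w * q ^ n) := by
      rw [Finset.sum_mul]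
    rw [hsecond]
    linear_combination -hfirst


noncomputable def jtpTerm (q z : ℂ) (k : ℤ) : ℂ := (-1) ^ k * q ^ (k * (k - 1) / 2) * z ^ k

lemma jtp_two_mul_tri (m : ℤ) : 2 * (m * (m - 1) / 2) = m * (m - 1) := by
  apply Int.mul_ediv_cancel'
  rcases Int.even_mul_succ_self (m - 1) with ⟨t, ht⟩
  exact ⟨t, by linarith⟩

lemma jtp_tri_cast (k : ℕ) : ((k * (k - 1) / 2 : ℕ) : ℤ) = (k : ℤ) * ((k : ℤ) - 1) / 2 := by
  rcases k with _ | m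
  · simp
  · have h1 : ((m : ℤ) + 1) * ((m : ℤ) + 1 - 1) = ((m + 1) * (m + 1 - 1) : ℕ) := by push_cast; ring
    push_cast [h1]
    generalize (m + 1) * (m + 1 - 1) = a
    omega

lemma jtp_triN_cast (N : ℕ) : ((N * (N + 1) / 2 : ℕ) : ℤ) = (N : ℤ) * ((N : ℤ) + 1) / 2 := by
  have h1 : (N : ℤ) * ((N : ℤ) + 1) = ((N * (N + 1) : ℕ)) := by push_cast; ring
  rw [h1]
  generalize N * (N + 1) = a
  omega

lemma jtp_two_mul_triN (N : ℤ) : 2 * (N * (N + 1) / 2) = N * (N + 1) := by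
  apply Int.mul_ediv_cancel'
  rcases Int.even_mul_succ_self N with ⟨t, ht⟩
  exact ⟨t, by linarith⟩

lemma jtp_tri_add (N : ℕ) : N * (N + 1) / 2 + N * (N - 1) / 2 = N * N := by
  rcases N with _ | m
  · simp
  · rw [show (m+1) * ((m+1) + 1) = (m+1) * m + 2 * (m+1) from by ring,
      Nat.add_mul_div_left _ _ (by norm_num : 0 < 2), Nat.add_sub_cancel]
    have h2 : (m+1) * m / 2 * 2 = (m+1) * m :=
      Nat.div_mul_cancel (by simpa [mul_comm] using (Nat.even_mul_succ_self m).two_dvd)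
    have h3 : (m+1) * (m+1) = (m+1) * m + (m+1) := by ring
    omega

lemma jtp_star {q z : ℂ} (hq1 : ‖q‖ < 1) (hq0 : q ≠ 0) (hz : z ≠ 0) (N : ℕ) :
    ∑ m ∈ Finset.Icc (-(N:ℤ)) (N:ℤ), jtpTerm q z m * jtpB q (2*N) (m + N).toNat
      = (∏ j ∈ Finset.range N, (1 - z * q ^ j))
        * (∏ j ∈ Finset.range N, (1 - (q/z) * q ^ j)) := by
  have hqN : (q : ℂ) ^ N ≠ 0 := pow_ne_zero _ hq0
  have hzN : (z : ℂ) ^ N ≠ 0 := pow_ne_zero _ hz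
  set w : ℂ := -z / q ^ N with hw
  set C : ℂ := (-1) ^ N * (z ^ N)⁻¹ * q ^ (N * (N + 1) / 2) with hC
  -- reindex the sum
  have hinj : Function.Injective (fun k : ℕ => (k:ℤ) - N) := by intro a b h; dsimp at h; omega
  have hmap : Finset.Icc (-(N:ℤ)) (N:ℤ)
      = (Finset.range (2*N+1)).map ⟨fun k : ℕ => (k:ℤ) - N, hinj⟩ := by
    ext m
    simp only [Finset.mem_Icc, Finset.mem_map, Finset.mem_range, Function.Embedding.coeFn_mk]
    constructor
    · intro h; exact ⟨(m + N).toNat, by omega, by omega⟩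
    · rintro ⟨k, hk, rfl⟩; omega
  rw [hmap, Finset.sum_map]
  simp only [Function.Embedding.coeFn_mk]
  have hterm : ∀ k ∈ Finset.range (2*N+1),
      jtpTerm q z ((k:ℤ) - N) * jtpB q (2*N) (((k:ℤ) - N + N).toNat)
        = C * (q ^ (k*(k-1)/2) * jtpB q (2*N) k * w ^ k) := by
    intro k hk
    have htn : (((k:ℤ) - N + N)).toNat = k := by omega
    rw [htn]
    have key : jtpTerm q z ((k:ℤ) - N) = C * (q ^ (k*(k-1)/2) * w ^ k) := by
      rw [jtpTerm]
      -- sign part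
      have hs2 : (-1:ℂ)^N * (-1:ℂ)^N = 1 := by
        rw [← pow_add, ← two_mul, pow_mul]; norm_num
      have hsgn : (-1:ℂ) ^ ((k:ℤ) - N) = (-1:ℂ)^N * (-1:ℂ)^k := by
        rw [zpow_sub₀ (by norm_num : (-1:ℂ) ≠ 0), zpow_natCast, zpow_natCast,
          div_eq_mul_inv, inv_eq_of_mul_eq_one_right hs2]
        ring
      -- z part
      have hzp : z ^ ((k:ℤ) - N) = z ^ k * (z ^ N)⁻¹ := by
        rw [zpow_sub₀ hz, zpow_natCast, zpow_natCast, div_eq_mul_inv]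
      -- q part
      have hE : ((k:ℤ) - N) * (((k:ℤ) - N) - 1) / 2
          = ((N * (N + 1) / 2 : ℕ) : ℤ) + ((k * (k - 1) / 2 : ℕ) : ℤ) - ((N * k : ℕ) : ℤ) := by
        rw [jtp_triN_cast, jtp_tri_cast]
        have h1 := jtp_two_mul_tri ((k:ℤ) - N)
        have h2 := jtp_two_mul_tri (k:ℤ)
        have h3 := jtp_two_mul_triN (N:ℤ)
        have h4 : ((k:ℤ) - N) * (((k:ℤ) - N) - 1)
            = (k:ℤ) * ((k:ℤ) - 1) - 2 * ((N:ℤ) * k) + (N:ℤ) * ((N:ℤ) + 1) := by ring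
        have h5 : ((N * k : ℕ) : ℤ) = (N:ℤ) * k := by push_cast; ring
        rw [h5]
        linarith
      have hqp : q ^ (((k:ℤ) - N) * (((k:ℤ) - N) - 1) / 2)
          = q ^ (N * (N + 1) / 2) * q ^ (k * (k - 1) / 2) * (q ^ (N * k))⁻¹ := by
        rw [hE, sub_eq_add_neg, zpow_add₀ hq0, zpow_add₀ hq0, zpow_neg,
          zpow_natCast, zpow_natCast, zpow_natCast]
      have hwk : w ^ k = (-1:ℂ)^k * z ^ k * (q ^ (N * k))⁻¹ := by
        rw [hw, div_pow, neg_pow, ← pow_mul, div_eq_mul_inv]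
      rw [hsgn, hzp, hqp, hwk, hC]
      ring
    rw [key]; ring
  rw [Finset.sum_congr rfl hterm, ← Finset.mul_sum, ← jtp_qbinom hq1 (2*N) w]
  -- split the product
  have hsplit : ∏ j ∈ Finset.range (2*N), (1 + w * q ^ j)
      = (∏ j ∈ Finset.range N, (1 + w * q ^ j)) * ∏ j ∈ Finset.range N, (1 + w * q ^ (N + j)) := by
    rw [two_mul, Finset.prod_range_add]
  have hB2 : ∏ j ∈ Finset.range N, (1 + w * q ^ (N + j))
      = ∏ j ∈ Finset.range N, (1 - z * q ^ j) := by
    apply Finset.prod_congr rfl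
    intro j _
    have : w * q ^ (N + j) = -(z * q ^ j) := by
      rw [hw, pow_add]
      field_simp
      try ring
    rw [this, ← sub_eq_add_neg]
  have hA2 : ∏ j ∈ Finset.range N, (1 + w * q ^ j)
      = ((-1)^N * z ^ N * (q ^ (N * N))⁻¹ * q ^ (N * (N - 1) / 2))
        * ∏ j ∈ Finset.range N, (1 - (q/z) * q ^ j) := by
    have hfac : ∀ j ∈ Finset.range N,
        1 + w * q ^ j = (-(z * q ^ j) * (q ^ N)⁻¹) * (1 - (q/z) * q ^ (N - 1 - j)) := by
      intro j hj
      rw [Finset.mem_range] at hj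
      have hje : j + 1 + (N - 1 - j) = N := by omega
      have : (q:ℂ) ^ (j + 1 + (N - 1 - j)) = q ^ N := by rw [hje]
      rw [pow_add, pow_add, pow_one] at this
      have h2N : (q:ℂ) ^ (N * 2) = q ^ N * q ^ N := by rw [pow_mul, sq]
      have e : (-(z * q ^ j) * (q ^ N)⁻¹) * ((q/z) * q ^ (N - 1 - j))
          = -((z * z⁻¹) * ((q ^ j * q * q ^ (N - 1 - j)) * (q ^ N)⁻¹)) := by ring
      rw [this, mul_inv_cancel₀ hz, mul_inv_cancel₀ hqN] at e
      rw [hw]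
      linear_combination e
    rw [Finset.prod_congr rfl hfac, Finset.prod_mul_distrib]
    congr 1
    · rw [Finset.prod_mul_distrib]
      have h1 : ∏ j ∈ Finset.range N, -(z * q ^ j) = (-1)^N * z^N * q ^ (N * (N-1)/2) := by
        have he : ∀ j ∈ Finset.range N, -(z * q ^ j) = (-z) * q ^ j := fun j _ => by ring
        rw [Finset.prod_congr rfl he, Finset.prod_mul_distrib, Finset.prod_const,
          Finset.card_range, Finset.prod_pow_eq_pow_sum, Finset.sum_range_id]
        ring
      have h2 : ∏ _j ∈ Finset.range N, ((q : ℂ) ^ N)⁻¹ = (q ^ (N * N))⁻¹ := by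
        rw [Finset.prod_const, Finset.card_range, inv_pow, ← pow_mul]
      rw [h1, h2]
      ring
    · exact Finset.prod_range_reflect (fun j => 1 - (q/z) * q ^ j) N
  rw [hsplit, hA2, hB2]
  have hscal : C * ((-1)^N * z ^ N * ((q:ℂ) ^ (N * N))⁻¹ * q ^ (N * (N - 1) / 2)) = 1 := by
    have hzz : (z ^ N)⁻¹ * z ^ N = 1 := inv_mul_cancel₀ hzN
    have hqq : (q:ℂ) ^ (N * (N + 1) / 2) * q ^ (N * (N - 1) / 2) = q ^ (N * N) := by
      rw [← pow_add, jtp_tri_add]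
    have hs2 : (-1:ℂ)^N * (-1:ℂ)^N = 1 := by
      rw [← pow_add, ← two_mul, pow_mul]; norm_num
    calc C * ((-1)^N * z ^ N * ((q:ℂ) ^ (N * N))⁻¹ * q ^ (N * (N - 1) / 2))
        = ((-1:ℂ)^N * (-1:ℂ)^N) * ((z ^ N)⁻¹ * z ^ N)
          * ((q ^ (N * (N + 1) / 2) * q ^ (N * (N - 1) / 2)) * (q ^ (N * N))⁻¹) := by
          rw [hC]; ring
      _ = 1 := by rw [hzz, hqq, hs2, mul_inv_cancel₀ (pow_ne_zero _ hq0)]; ring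
  calc C * ((((-1)^N * z ^ N * ((q:ℂ) ^ (N * N))⁻¹ * q ^ (N * (N - 1) / 2))
          * ∏ j ∈ Finset.range N, (1 - (q/z) * q ^ j)) * ∏ j ∈ Finset.range N, (1 - z * q ^ j))
      = (C * ((-1)^N * z ^ N * ((q:ℂ) ^ (N * N))⁻¹ * q ^ (N * (N - 1) / 2)))
        * ((∏ j ∈ Finset.range N, (1 - z * q ^ j)) * ∏ j ∈ Finset.range N, (1 - (q/z) * q ^ j)) := by
        ring
    _ = (∏ j ∈ Finset.range N, (1 - z * q ^ j)) * ∏ j ∈ Finset.range N, (1 - (q/z) * q ^ j) := by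
        rw [hscal, one_mul]










-- ratio identities
lemma jtp_term_succ {q z : ℂ} (hq0 : q ≠ 0) (hz : z ≠ 0) (m : ℤ) :
    jtpTerm q z (m + 1) = jtpTerm q z m * (-(q ^ m * z)) := by
  rw [jtpTerm, jtpTerm]
  have he : (m + 1) * (m + 1 - 1) / 2 = m * (m - 1) / 2 + m := by
    have h1 := jtp_two_mul_tri (m + 1)
    have h2 := jtp_two_mul_tri m
    have h3 : (m + 1) * (m + 1 - 1) = m * (m - 1) + 2 * m := by ring
    linarith
  rw [he, zpow_add₀ hq0, zpow_add₀ (by norm_num : (-1:ℂ) ≠ 0), zpow_add₀ hz,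
    zpow_one, zpow_one]
  ring

lemma jtp_term_pred {q z : ℂ} (hq0 : q ≠ 0) (hz : z ≠ 0) (m : ℤ) :
    jtpTerm q z (m - 1) = jtpTerm q z m * (-(q ^ (1 - m) * z⁻¹)) := by
  rw [jtpTerm, jtpTerm]
  have he : (m - 1) * (m - 1 - 1) / 2 = m * (m - 1) / 2 + (1 - m) := by
    have h1 := jtp_two_mul_tri (m - 1)
    have h2 := jtp_two_mul_tri m
    have h3 : (m - 1) * (m - 1 - 1) = m * (m - 1) + 2 * (1 - m) := by ring
    linarith
  rw [he, zpow_add₀ hq0, sub_eq_add_neg m 1, zpow_add₀ (by norm_num : (-1:ℂ) ≠ 0),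
    zpow_add₀ hz, zpow_neg, zpow_one, zpow_neg, zpow_one]
  ring

lemma jtp_summable_abs {q z : ℂ} (hq1 : ‖q‖ < 1) (hq0 : q ≠ 0) (hz : z ≠ 0) :
    Summable (fun m : ℤ => ‖jtpTerm q z m‖) := by
  set r := ‖q‖ with hr
  have hr0 : 0 ≤ r := norm_nonneg q
  have hrpow : Tendsto (fun n : ℕ => r ^ n) atTop (𝓝 0) :=
    tendsto_pow_atTop_nhds_zero_of_lt_one hr0 hq1
  apply Summable.of_nat_of_neg
  · apply summable_of_ratio_norm_eventually_le (r := 1/2) (by norm_num)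
    have hev : ∀ᶠ n : ℕ in atTop, r ^ n * ‖z‖ ≤ 1/2 := by
      have : Tendsto (fun n : ℕ => r ^ n * ‖z‖) atTop (𝓝 (0 * ‖z‖)) :=
        hrpow.mul_const _
      rw [zero_mul] at this
      exact this.eventually_le_const (by norm_num)
    filter_upwards [hev] with n hn
    have hstep : jtpTerm q z ((n:ℤ) + 1) = jtpTerm q z n * (-(q ^ (n:ℤ) * z)) :=
      jtp_term_succ hq0 hz n
    have hcast : ((n + 1 : ℕ) : ℤ) = (n : ℤ) + 1 := by push_cast; ring
    rw [Real.norm_eq_abs, Real.norm_eq_abs, abs_of_nonneg (norm_nonneg _),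
      abs_of_nonneg (norm_nonneg _), hcast, hstep, norm_mul]
    have habs : ‖-(q ^ (n:ℤ) * z)‖ = r ^ n * ‖z‖ := by
      rw [norm_neg, norm_mul, norm_zpow, ← hr, zpow_natCast]
    rw [habs, mul_comm (1/2 : ℝ)]
    exact mul_le_mul_of_nonneg_left hn (norm_nonneg _)
  · apply summable_of_ratio_norm_eventually_le (r := 1/2) (by norm_num)
    have hev : ∀ᶠ n : ℕ in atTop, r ^ (n+1) * (‖z‖)⁻¹ ≤ 1/2 := by
      have h1 : Tendsto (fun n : ℕ => r ^ (n+1) * (‖z‖)⁻¹) atTop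
          (𝓝 (0 * (‖z‖)⁻¹)) := by
        apply Tendsto.mul_const
        exact hrpow.comp (tendsto_add_atTop_nat 1)
      rw [zero_mul] at h1
      exact h1.eventually_le_const (by norm_num)
    filter_upwards [hev] with n hn
    have hstep : jtpTerm q z (-(n:ℤ) - 1) = jtpTerm q z (-(n:ℤ)) * (-(q ^ (1 + (n:ℤ)) * z⁻¹)) := by
      have := jtp_term_pred hq0 hz (-(n:ℤ))
      rw [this]
      congr 2
      ring_nf
    have hcast : (-(↑(n + 1) : ℤ)) = -(n:ℤ) - 1 := by push_cast; ring
    rw [Real.norm_eq_abs, Real.norm_eq_abs, abs_of_nonneg (norm_nonneg _),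
      abs_of_nonneg (norm_nonneg _), hcast, hstep, norm_mul]
    have habs : ‖-(q ^ (1 + (n:ℤ)) * z⁻¹)‖ = r ^ (n+1) * (‖z‖)⁻¹ := by
      rw [norm_neg, norm_mul, norm_zpow, norm_inv, ← hr]
      congr 1
      rw [show (1 + (n:ℤ)) = ((n + 1 : ℕ) : ℤ) by push_cast; ring, zpow_natCast]
    rw [habs, mul_comm (1/2 : ℝ)]
    exact mul_le_mul_of_nonneg_left hn (norm_nonneg _)

lemma jtp_abs_B_le {q : ℂ} (hq1 : ‖q‖ < 1) (n k : ℕ) :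
    ‖jtpB q n k‖
      ≤ Real.exp (‖q‖ / (1 - ‖q‖))
        / Real.exp (-(‖q‖ / (1 - ‖q‖) ^ 2)) ^ 2 := by
  set A := Real.exp (‖q‖ / (1 - ‖q‖)) with hA
  set c := Real.exp (-(‖q‖ / (1 - ‖q‖) ^ 2)) with hc
  have hcpos : 0 < c := Real.exp_pos _
  have hApos : 0 < A := Real.exp_pos _
  rw [jtpB]
  split_ifs with h
  · rw [norm_div, norm_mul]
    apply div_le_div₀ hApos.le (jtp_abs_P_le q hq1 n)
    · positivity
    · rw [sq]
      apply mul_le_mul (jtp_abs_P_ge q hq1 k) (jtp_abs_P_ge q hq1 (n-k)) hcpos.le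
      exact (norm_nonneg _)
  · rw [norm_zero]
    positivity

/-- Jacobi's triple product identity: for `0 < |q| < 1` and `z ≠ 0`,
the bilateral series `∑_{k=-∞}^{∞} (-1)^k q^{k(k-1)/2} z^k` converges absolutely
and equals `(q;q)_∞ (z;q)_∞ (q/z;q)_∞`. -/
theorem jacobi_triple_product (q z : ℂ) (hq0 : 0 < ‖q‖)
    (hq1 : ‖q‖ < 1) (hz : z ≠ 0) :
    Summable (fun k : ℤ =>
      ‖(-1 : ℂ) ^ k * q ^ (k * (k - 1) / 2) * z ^ k‖) ∧
    ∑' k : ℤ, (-1 : ℂ) ^ k * q ^ (k * (k - 1) / 2) * z ^ k =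
      qPochInf q q * qPochInf z q * qPochInf (q / z) q := by
  have hq0' : q ≠ 0 := by
    intro h; rw [h] at hq0; simp at hq0
  have hsumabs : Summable (fun m : ℤ => ‖jtpTerm q z m‖) :=
    jtp_summable_abs hq1 hq0' hz
  constructor
  · exact hsumabs
  -- setup
  set Pinf := qPochInf q q with hPinf
  have hPtend : Tendsto (fun N => jtpP q N) atTop (𝓝 Pinf) := jtp_tendsto_poch q q hq1
  have hPne : Pinf ≠ 0 := by
    set c := Real.exp (-(‖q‖ / (1 - ‖q‖) ^ 2)) with hc
    have hcpos : 0 < c := Real.exp_pos _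
    have habs : Tendsto (fun N => ‖jtpP q N‖) atTop (𝓝 (‖Pinf‖)) :=
      (continuous_norm.tendsto _).comp hPtend
    have hge : c ≤ ‖Pinf‖ :=
      ge_of_tendsto habs (Eventually.of_forall (jtp_abs_P_ge q hq1))
    intro h
    rw [h] at hge
    simp at hge
    linarith
  -- the approximating functions
  set F : ℕ → ℤ → ℂ := fun N m =>
    if m ∈ Finset.Icc (-(N:ℤ)) (N:ℤ) then jtpTerm q z m * jtpB q (2*N) (m + N).toNat else 0
    with hF
  set M := Real.exp (‖q‖ / (1 - ‖q‖))
        / Real.exp (-(‖q‖ / (1 - ‖q‖) ^ 2)) ^ 2 with hM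
  have hMpos : 0 < M := by rw [hM]; positivity
  -- dominated convergence
  have htendB : ∀ m : ℤ, Tendsto (fun N : ℕ => jtpB q (2*N) ((m + N).toNat)) atTop
      (𝓝 (Pinf / (Pinf * Pinf))) := by
    intro m
    have h2N : Tendsto (fun N : ℕ => jtpP q (2*N)) atTop (𝓝 Pinf) := by
      apply hPtend.comp
      apply tendsto_atTop_atTop_of_monotone (fun a b h => by omega)
      exact fun b => ⟨b, by omega⟩
    have hup : Tendsto (fun N : ℕ => jtpP q ((m + N).toNat)) atTop (𝓝 Pinf) := by
      apply hPtend.comp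
      rw [tendsto_atTop_atTop]
      exact fun b => ⟨b + m.natAbs, fun a ha => by omega⟩
    have hdn : Tendsto (fun N : ℕ => jtpP q (((N:ℤ) - m).toNat)) atTop (𝓝 Pinf) := by
      apply hPtend.comp
      rw [tendsto_atTop_atTop]
      exact fun b => ⟨b + m.natAbs, fun a ha => by omega⟩
    have hdiv : Tendsto (fun N : ℕ =>
        jtpP q (2*N) / (jtpP q ((m + N).toNat) * jtpP q (((N:ℤ) - m).toNat))) atTop
        (𝓝 (Pinf / (Pinf * Pinf))) :=
      h2N.div (hup.mul hdn) (by exact mul_ne_zero hPne hPne)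
    apply Tendsto.congr' _ hdiv
    filter_upwards [eventually_ge_atTop m.natAbs] with N hN
    rw [jtpB, if_pos (by omega)]
    have he : 2*N - (m + N).toNat = ((N:ℤ) - m).toNat := by omega
    rw [he]
  have htendF : ∀ m : ℤ, Tendsto (fun N : ℕ => F N m) atTop
      (𝓝 (jtpTerm q z m * (Pinf / (Pinf * Pinf)))) := by
    intro m
    apply Tendsto.congr' _ (((htendB m).const_mul (jtpTerm q z m)))
    filter_upwards [eventually_ge_atTop m.natAbs] with N hN
    rw [hF]
    simp only
    rw [if_pos (by rw [Finset.mem_Icc]; omega)]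
  have hbound : ∀ᶠ N : ℕ in atTop, ∀ m : ℤ, ‖F N m‖ ≤ ‖jtpTerm q z m‖ * M := by
    apply Eventually.of_forall
    intro N m
    rw [hF]
    simp only
    split_ifs with h
    · rw [norm_mul]
      exact mul_le_mul_of_nonneg_left (jtp_abs_B_le hq1 _ _) (norm_nonneg _)
    · simp only [norm_zero]
      positivity
  have hbsum : Summable (fun m : ℤ => ‖jtpTerm q z m‖ * M) :=
    hsumabs.mul_right M
  have htann := tendsto_tsum_of_dominated_convergence hbsum htendF hbound
  -- identify the finite sums
  have hfin : ∀ N : ℕ, ∑' m : ℤ, F N m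
      = (∏ j ∈ Finset.range N, (1 - z * q ^ j))
        * (∏ j ∈ Finset.range N, (1 - (q/z) * q ^ j)) := by
    intro N
    rw [tsum_eq_sum (s := Finset.Icc (-(N:ℤ)) (N:ℤ)) (fun m hm => by rw [hF]; simp only; rw [if_neg hm])]
    rw [← jtp_star hq1 hq0' hz N]
    apply Finset.sum_congr rfl
    intro m hm
    rw [hF]
    simp only
    rw [if_pos hm]
  rw [tendsto_congr hfin] at htann
  have hprod : Tendsto (fun N : ℕ =>
      (∏ j ∈ Finset.range N, (1 - z * q ^ j))
        * (∏ j ∈ Finset.range N, (1 - (q/z) * q ^ j))) atTop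
      (𝓝 (qPochInf z q * qPochInf (q/z) q)) :=
    (jtp_tendsto_poch q z hq1).mul (jtp_tendsto_poch q (q/z) hq1)
  have hkey : ∑' m : ℤ, jtpTerm q z m * (Pinf / (Pinf * Pinf))
      = qPochInf z q * qPochInf (q/z) q := tendsto_nhds_unique htann hprod
  have hsimp : Pinf / (Pinf * Pinf) = Pinf⁻¹ := by
    field_simp
  rw [hsimp, tsum_mul_right] at hkey
  have hfinal : ∑' m : ℤ, jtpTerm q z m = Pinf * (qPochInf z q * qPochInf (q/z) q) := by
    have h2 : (∑' m : ℤ, jtpTerm q z m) = (qPochInf z q * qPochInf (q/z) q) * Pinf := by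
      rw [← hkey]
      field_simp
    rw [h2]; ring
  calc ∑' k : ℤ, (-1 : ℂ) ^ k * q ^ (k * (k - 1) / 2) * z ^ k
      = ∑' m : ℤ, jtpTerm q z m := rfl
    _ = Pinf * (qPochInf z q * qPochInf (q/z) q) := hfinal
    _ = qPochInf q q * qPochInf z q * qPochInf (q / z) q := by rw [hPinf]; ring
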